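/- Let {x^k}, {y^k}, {d^k} ⊂ C and {t_k} ⊂ (0, t̄] (with t̄ < ∞) be sequences generated by the ABPG-VMAW recurrences with parameters 0 < c₁ < c₂ < 1 and λ > 0, and suppose Ψ* := inf_{x ∈ cl C} Ψ(x) > −∞. Then ∑_{k=0}^{∞} ‖t_k d^k‖² ≤ (2λ t̄/(c₁ σ)) (Ψ(x⁰) − Ψ*) < ∞; in particular ‖t_k d^k‖ → 0 as k → ∞. -/

import Mathlib

open Set Filter Topology
open scoped RealInnerProductSpace

/-- The convex subdifferential of `g + δ_S` at `x`. -/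
def subdiffWithin {E : Type*} [NormedAddCommGroup E] [InnerProductSpace ℝ E]
    (g : E → ℝ) (S : Set E) (x : E) : Set E :=
  {ξ | ∀ y ∈ S, g x + ⟪ξ, y - x⟫ ≤ g y}

/-- `∑ ‖t_k d^k‖² < ∞` and `‖t_k d^k‖ → 0` for ABPG-VMAW. -/
theorem stmt3
    {E : Type*} [NormedAddCommGroup E] [InnerProductSpace ℝ E] [FiniteDimensional ℝ E]
    (C : Set E) (hCne : C.Nonempty) (hCopen : IsOpen C) (hCconv : Convex ℝ C)
    (φ f g : E → ℝ) (φ' f' : E → E) (Hφ : E → E →L[ℝ] E) (σ : ℝ) (hσ : 0 < σ)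
    (hφconv : ConvexOn ℝ Set.univ φ) (hφlsc : LowerSemicontinuous φ)
    (hφ'grad : ∀ z ∈ C, HasGradientAt φ (φ' z) z)
    (hφ'' : ∀ z ∈ C, HasFDerivAt φ' (Hφ z) z)
    (hφ''cont : ContinuousOn Hφ C)
    (hφstrong : ∀ z ∈ C, ∀ u : E, σ * ‖u‖ ^ 2 ≤ ⟪Hφ z u, u⟫)
    (hf'grad : ∀ z ∈ C, HasGradientAt f (f' z) z)
    (hf'cont : ContinuousOn f' C)
    (hgconv : ConvexOn ℝ Set.univ g) (hglsc : LowerSemicontinuous g)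
    (Ψ : E → ℝ) (hΨ : ∀ z, Ψ z = f z + g z)
    (c₁ c₂ lam : ℝ) (hc₁ : 0 < c₁) (hc₁₂ : c₁ < c₂) (hc₂ : c₂ < 1) (hlam : 0 < lam)
    (x y d : ℕ → E) (t : ℕ → ℝ) (tbar : ℝ)
    (hxC : ∀ k, x k ∈ C) (hyC : ∀ k, y k ∈ C)
    (ht : ∀ k, 0 < t k) (htbar : ∀ k, t k ≤ tbar)
    (hymin : ∀ k, IsMinOn (fun u => ⟪f' (x k), u - x k⟫ + g u +
      (1 / (2 * lam)) * ⟪Hφ (x k) (u - x k), u - x k⟫) (closure C) (y k))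
    (hd : ∀ k, d k = y k - x k)
    (hstep : ∀ k, x k + t k • d k ∈ closure C)
    (hArmijo : ∀ k, Ψ (x k + t k • d k) < Ψ (x k) + c₁ * t k *
      (⟪f' (x k), d k⟫ + g (y k) - g (x k) +
        (1 / (2 * lam)) * ⟪Hφ (x k) (d k), d k⟫))
    (hWolfe : ∀ k, ∃ ξ ∈ subdiffWithin g Set.univ (x k),
      c₂ * ⟪f' (x k) + ξ, d k⟫ < ⟪f' (x k + t k • d k) + ξ, d k⟫)
    (hupdate : ∀ k, x (k + 1) =
      if Ψ (y k) < Ψ (x k + t k • d k) then y k else x k + t k • d k)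
    (hbdd : BddBelow (Ψ '' closure C)) :
    Summable (fun k => ‖t k • d k‖ ^ 2) ∧
    (∑' k, ‖t k • d k‖ ^ 2) ≤
      (2 * lam * tbar / (c₁ * σ)) * (Ψ (x 0) - sInf (Ψ '' closure C)) ∧
    Tendsto (fun k => ‖t k • d k‖) atTop (𝓝 0) := by

  have htbar0 : 0 < tbar := lt_of_lt_of_le (ht 0) (htbar 0)
  -- Key lemma A : the model decrease is at least (σ/(2λ))‖d‖²
  have keyA : ∀ k, ⟪f' (x k), d k⟫ + g (y k) - g (x k) +
      (1 / (2 * lam)) * ⟪Hφ (x k) (d k), d k⟫ ≤ -(σ / (2 * lam)) * ‖d k‖ ^ 2 := by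
    intro k
    have hq : σ * ‖d k‖ ^ 2 ≤ ⟪Hφ (x k) (d k), d k⟫ := hφstrong (x k) (hxC k) (d k)
    have hc : (0 : ℝ) < 1 / (2 * lam) := by positivity
    have per : ∀ θ ∈ Ioo (0:ℝ) 1,
        ⟪f' (x k), d k⟫ + g (y k) - g (x k) +
          (1 / (2 * lam)) * ⟪Hφ (x k) (d k), d k⟫
          ≤ (θ - 1) * (σ / (2 * lam)) * ‖d k‖ ^ 2 := by
      intro θ hθ
      obtain ⟨hθ0, hθ1⟩ := hθ
      have hzmem : (1 - θ) • y k + θ • x k ∈ closure C :=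
        hCconv.closure (subset_closure (hyC k)) (subset_closure (hxC k))
          (by linarith) (le_of_lt hθ0) (by ring)
      have hmin := isMinOn_iff.mp (hymin k) _ hzmem
      have hzx : ((1 - θ) • y k + θ • x k) - x k = (1 - θ) • d k := by
        rw [hd]; module
      have hyx : y k - x k = d k := (hd k).symm
      rw [hyx, hzx] at hmin
      have hHsmul : ⟪Hφ (x k) ((1 - θ) • d k), (1 - θ) • d k⟫
          = (1 - θ) ^ 2 * ⟪Hφ (x k) (d k), d k⟫ := by
        rw [map_smul, real_inner_smul_left, real_inner_smul_right]; ring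
      have hinner : ⟪f' (x k), (1 - θ) • d k⟫ = (1 - θ) * ⟪f' (x k), d k⟫ :=
        real_inner_smul_right _ _ _
      rw [hinner, hHsmul] at hmin
      have hgz : g ((1 - θ) • y k + θ • x k) ≤ (1 - θ) * g (y k) + θ * g (x k) :=
        hgconv.2 (mem_univ _) (mem_univ _) (by linarith) (le_of_lt hθ0) (by ring)
      set A := ⟪f' (x k), d k⟫ with hA
      set Q := ⟪Hφ (x k) (d k), d k⟫ with hQ
      have step1 : θ * (A + g (y k) - g (x k)) ≤
          θ * ((1 / (2 * lam)) * (θ - 2) * Q) := by nlinarith [hmin, hgz]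
      have step2 : A + g (y k) - g (x k) ≤ (1 / (2 * lam)) * (θ - 2) * Q :=
        le_of_mul_le_mul_left step1 hθ0
      have e2a : (θ - 1) * Q ≤ (θ - 1) * (σ * ‖d k‖ ^ 2) :=
        mul_le_mul_of_nonpos_left hq (by linarith)
      have e2b := mul_le_mul_of_nonneg_left e2a hc.le
      calc A + g (y k) - g (x k) + 1 / (2 * lam) * Q
          ≤ 1 / (2 * lam) * ((θ - 1) * Q) := by nlinarith [step2]
        _ ≤ 1 / (2 * lam) * ((θ - 1) * (σ * ‖d k‖ ^ 2)) := e2b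
        _ = (θ - 1) * (σ / (2 * lam)) * ‖d k‖ ^ 2 := by ring
    have hlim : Tendsto (fun θ : ℝ => (θ - 1) * (σ / (2 * lam)) * ‖d k‖ ^ 2)
        (𝓝[>] (0:ℝ)) (𝓝 (((0:ℝ) - 1) * (σ / (2 * lam)) * ‖d k‖ ^ 2)) := by
      apply Tendsto.mono_left _ nhdsWithin_le_nhds
      exact Continuous.tendsto
        (((continuous_id.sub continuous_const).mul continuous_const).mul continuous_const) 0
    have hev : ∀ᶠ θ in 𝓝[>] (0:ℝ),
        ⟪f' (x k), d k⟫ + g (y k) - g (x k) +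
          (1 / (2 * lam)) * ⟪Hφ (x k) (d k), d k⟫
          ≤ (θ - 1) * (σ / (2 * lam)) * ‖d k‖ ^ 2 := by
      filter_upwards [Ioo_mem_nhdsGT_of_mem (by constructor <;> norm_num :
        (0:ℝ) ∈ Ico (0:ℝ) 1)] with θ hθ using per θ hθ
    have h := ge_of_tendsto hlim hev
    nlinarith [h]
  -- descent lemma
  have lemB : ∀ k, Ψ (x (k + 1)) ≤ Ψ (x k) - c₁ * t k * (σ / (2 * lam)) * ‖d k‖ ^ 2 := by
    intro k
    have h3 : Ψ (x (k + 1)) ≤ Ψ (x k + t k • d k) := by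
      rw [hupdate k]; split_ifs with h
      · exact le_of_lt h
      · exact le_rfl
    have h1 := hArmijo k
    have h2 := keyA k
    nlinarith [mul_le_mul_of_nonneg_left h2
      (le_of_lt (mul_pos hc₁ (ht k)) : (0:ℝ) ≤ c₁ * t k)]
  set K : ℝ := 2 * lam * tbar / (c₁ * σ) with hKdef
  have hK0 : (0:ℝ) ≤ K := by positivity
  have hKc : K * (c₁ * (σ / (2 * lam))) = tbar := by
    field_simp [hKdef]
    rw [hKdef]; field_simp
  -- per step bound
  have hstepb : ∀ k, ‖t k • d k‖ ^ 2 ≤ K * (Ψ (x k) - Ψ (x (k + 1))) := by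
    intro k
    have hnorm : ‖t k • d k‖ ^ 2 = t k ^ 2 * ‖d k‖ ^ 2 := by
      rw [norm_smul, mul_pow, Real.norm_eq_abs, sq_abs]
    have h1 : t k ^ 2 * ‖d k‖ ^ 2 ≤ tbar * (t k * ‖d k‖ ^ 2) := by
      nlinarith [ht k, htbar k, sq_nonneg (‖d k‖), mul_nonneg (le_of_lt (ht k)) (sq_nonneg (‖d k‖))]
    have h2 : tbar * (t k * ‖d k‖ ^ 2) = K * (c₁ * (σ / (2 * lam)) * (t k * ‖d k‖ ^ 2)) := by
      rw [← hKc]; ring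
    have h3 : c₁ * (σ / (2 * lam)) * (t k * ‖d k‖ ^ 2) ≤ Ψ (x k) - Ψ (x (k + 1)) := by
      have := lemB k; nlinarith [this]
    calc ‖t k • d k‖ ^ 2 = t k ^ 2 * ‖d k‖ ^ 2 := hnorm
      _ ≤ tbar * (t k * ‖d k‖ ^ 2) := h1
      _ = K * (c₁ * (σ / (2 * lam)) * (t k * ‖d k‖ ^ 2)) := h2
      _ ≤ K * (Ψ (x k) - Ψ (x (k + 1))) := mul_le_mul_of_nonneg_left h3 hK0
  have hInf : ∀ N, sInf (Ψ '' closure C) ≤ Ψ (x N) := fun N =>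
    csInf_le hbdd ⟨x N, subset_closure (hxC N), rfl⟩
  have hpartial : ∀ N, ∑ k ∈ Finset.range N, ‖t k • d k‖ ^ 2 ≤
      K * (Ψ (x 0) - sInf (Ψ '' closure C)) := by
    intro N
    calc ∑ k ∈ Finset.range N, ‖t k • d k‖ ^ 2
        ≤ ∑ k ∈ Finset.range N, K * (Ψ (x k) - Ψ (x (k + 1))) :=
          Finset.sum_le_sum fun k _ => hstepb k
      _ = K * (Ψ (x 0) - Ψ (x N)) := by
          rw [← Finset.mul_sum, Finset.sum_range_sub' (fun k => Ψ (x k))]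
      _ ≤ K * (Ψ (x 0) - sInf (Ψ '' closure C)) := by
          apply mul_le_mul_of_nonneg_left _ hK0
          linarith [hInf N]
  have hsum : Summable (fun k => ‖t k • d k‖ ^ 2) :=
    summable_of_sum_range_le (fun k => sq_nonneg _) hpartial
  refine ⟨hsum, Summable.tsum_le_of_sum_range_le hsum hpartial, ?_⟩
  have h0 : Tendsto (fun k => ‖t k • d k‖ ^ 2) atTop (𝓝 0) := hsum.tendsto_atTop_zero
  have := (Real.continuous_sqrt.tendsto 0).comp h0
  simp only [Function.comp_def, Real.sqrt_zero] at this
  convert this using 2 with k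
  rw [Real.sqrt_sq (norm_nonneg _)]
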